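/- arXiv:2312.14066 — 3 statements merged into one kernel-verified Lean document; each statement's English description precedes it below -/
import Mathlib

section
/- Let n, f, d be positive natural numbers, let X̃₁, X̃₂ ∈ ℝ^{n×f} and W ∈ ℝ^{f×d}, and set Z¹ = X̃₁ W and Z² = X̃₂ W. Assume every column Z¹_{:i} and Z²_{:i} (1 ≤ i ≤ d) is nonzero, and let Λ¹_{ii} = ‖Z¹_{:i}‖₂ and Λ²_{ii} = ‖Z²_{:i}‖₂. Define the cross-correlation matrix M ∈ ℝ^{d×d} by M_{ij} = ⟨Z¹_{:i}, Z²_{:j}⟩ / (‖Z¹_{:i}‖₂ · ‖Z²_{:j}‖₂), and for λ > 0 define the Barlow Twins loss L_BT = Σ_{i=1}^{d} (M_{ii} − 1)² + λ Σ_{i=1}^{d} Σ_{j ≠ i} (M_{ij})². If the matrix H = X̃₁ᵀ X̃₂ ∈ ℝ^{f×f} is negative semi-definite as a quadratic form (i.e., xᵀ H x ≤ 0 for every x ∈ ℝ^f), then L_BT ≥ Σ_{i=1}^{d} ( (Λ¹_{ii} Λ²_{ii}) / ((max_{1≤k≤d} Λ¹_{kk}) · (max_{1≤k≤d} Λ²_{kk}))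 )². -/
open Matrix BigOperators RealInnerProductSpace

/-- The `i`-th column of a real matrix, viewed as a vector in Euclidean space. -/
noncomputable def matCol {n d : ℕ} (Z : Matrix (Fin n) (Fin d) ℝ) (i : Fin d) :
    EuclideanSpace ℝ (Fin n) := WithLp.toLp 2 (fun k => Z k i)

/-- **Proposition 1 (Barlow Twins lower bound).** If the inner product
`H = X̃₁ᵀ X̃₂` of the two inputs is negative semi-definite as a quadratic form,
then the Barlow Twins loss is bounded below by
`∑ i, ((Λ¹ᵢᵢ Λ²ᵢᵢ) / (maxₖ Λ¹ₖₖ · maxₖ Λ²ₖₖ))²`. -/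
theorem barlow_twins_lower_bound
    (n f d : ℕ) (hn : 0 < n) (hf : 0 < f) (hd : 0 < d)
    (X1 X2 : Matrix (Fin n) (Fin f) ℝ) (W : Matrix (Fin f) (Fin d) ℝ)
    (lam : ℝ) (hlam : 0 < lam)
    (Z1 Z2 : Matrix (Fin n) (Fin d) ℝ)
    (hZ1 : Z1 = X1 * W) (hZ2 : Z2 = X2 * W)
    (hcol1 : ∀ i, matCol Z1 i ≠ 0) (hcol2 : ∀ i, matCol Z2 i ≠ 0)
    (Λ1 Λ2 : Fin d → ℝ)
    (hΛ1 : ∀ i, Λ1 i = ‖matCol Z1 i‖) (hΛ2 : ∀ i, Λ2 i = ‖matCol Z2 i‖)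
    (M : Matrix (Fin d) (Fin d) ℝ)
    (hM : ∀ i j, M i j = ⟪matCol Z1 i, matCol Z2 j⟫ / (‖matCol Z1 i‖ * ‖matCol Z2 j‖))
    (hH : ∀ x : Fin f → ℝ, x ⬝ᵥ ((X1ᵀ * X2) *ᵥ x) ≤ 0) :
    (∑ i, (M i i - 1) ^ 2) + lam * ∑ i, ∑ j ∈ Finset.univ.erase i, (M i j) ^ 2 ≥
      ∑ i, ((Λ1 i * Λ2 i) /
        ((Finset.univ.sup' ⟨⟨0, hd⟩, Finset.mem_univ _⟩ Λ1) *
         (Finset.univ.sup' ⟨⟨0, hd⟩, Finset.mem_univ _⟩ Λ2))) ^ 2 := by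
  set i0 : Fin d := ⟨0, hd⟩
  set s1 := Finset.univ.sup' ⟨i0, Finset.mem_univ _⟩ Λ1 with hs1def
  set s2 := Finset.univ.sup' ⟨i0, Finset.mem_univ _⟩ Λ2 with hs2def
  have hΛ1pos : ∀ i, 0 < Λ1 i := fun i => by
    rw [hΛ1]; exact norm_pos_iff.mpr (hcol1 i)
  have hΛ2pos : ∀ i, 0 < Λ2 i := fun i => by
    rw [hΛ2]; exact norm_pos_iff.mpr (hcol2 i)
  have hs1le : ∀ i, Λ1 i ≤ s1 := fun i => Finset.le_sup' Λ1 (Finset.mem_univ i)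
  have hs2le : ∀ i, Λ2 i ≤ s2 := fun i => Finset.le_sup' Λ2 (Finset.mem_univ i)
  have hs1 : 0 < s1 := lt_of_lt_of_le (hΛ1pos i0) (hs1le i0)
  have hs2 : 0 < s2 := lt_of_lt_of_le (hΛ2pos i0) (hs2le i0)
  have hterm : ∀ i : Fin d, ((Λ1 i * Λ2 i) / (s1 * s2)) ^ 2 ≤ (M i i - 1) ^ 2 := by
    intro i
    have hinner : ⟪matCol Z1 i, matCol Z2 i⟫ =
        (fun a => W a i) ⬝ᵥ ((X1ᵀ * X2) *ᵥ fun a => W a i) := by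
      have ha : ⟪matCol Z1 i, matCol Z2 i⟫ = (Z1ᵀ * Z2) i i := by
        simp [matCol, PiLp.inner_apply, RCLike.inner_apply, Matrix.mul_apply,
          Matrix.transpose_apply, mul_comm]
      have hb : Z1ᵀ * Z2 = Wᵀ * ((X1ᵀ * X2) * W) := by
        rw [hZ1, hZ2, Matrix.transpose_mul, Matrix.mul_assoc, Matrix.mul_assoc]
      rw [ha, hb]
      simp [Matrix.mul_apply, Matrix.transpose_apply, dotProduct, Matrix.mulVec]
    have hMle : M i i ≤ 0 := by
      rw [hM]
      apply div_nonpos_of_nonpos_of_nonneg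
      · rw [hinner]; exact hH _
      · positivity
    have h1 : (1 : ℝ) ≤ (M i i - 1) ^ 2 := by nlinarith
    have h2 : ((Λ1 i * Λ2 i) / (s1 * s2)) ^ 2 ≤ 1 := by
      rw [div_pow, div_le_one (by positivity)]
      have hmul : Λ1 i * Λ2 i ≤ s1 * s2 :=
        mul_le_mul (hs1le i) (hs2le i) (hΛ2pos i).le hs1.le
      exact pow_le_pow_left₀ (mul_nonneg (hΛ1pos i).le (hΛ2pos i).le) hmul 2
    linarith
  have hsum : ∑ i, ((Λ1 i * Λ2 i) / (s1 * s2)) ^ 2 ≤ ∑ i, (M i i - 1) ^ 2 :=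
    Finset.sum_le_sum fun i _ => hterm i
  have hnn : 0 ≤ lam * ∑ i, ∑ j ∈ Finset.univ.erase i, (M i j) ^ 2 := by positivity
  linarith
end

section
/- Let n, f, d be positive natural numbers, let X̃₁, X̃₂ ∈ ℝ^{n×f} and W ∈ ℝ^{f×d}, and set Z¹ = X̃₁ W and Z² = X̃₂ W. Assume every column Z¹_{:i} and Z²_{:i} (1 ≤ i ≤ d) is nonzero. Define the cross-correlation matrix M ∈ ℝ^{d×d} by M_{ij} = ⟨Z¹_{:i}, Z²_{:j}⟩ / (‖Z¹_{:i}‖₂ · ‖Z²_{:j}‖₂), and for λ > 0 define the Barlow Twins loss L_BT = Σ_{i=1}^{d} (M_{ii} − 1)² + λ Σ_{i=1}^{d} Σ_{j ≠ i} (M_{ij})². If the matrix H = X̃₁ᵀ X̃₂ ∈ ℝ^{f×f} is positive semi-definite as a quadratic form (i.e., xᵀ H x ≥ 0 for every x ∈ ℝ^f), then L_BT ≤ d + λ Σ_{i=1}^{d} Σ_{j ≠ i} (M_{ij})². -/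
open Matrix BigOperators RealInnerProductSpace

/-- **Proposition 2 (Barlow Twins upper bound).** If the inner product
`H = X̃₁ᵀ X̃₂` of the two inputs is positive semi-definite as a quadratic form,
then the Barlow Twins loss is bounded above by
`d + λ ∑ i ∑ j ≠ i, (Mᵢⱼ)²`. -/
theorem barlow_twins_upper_bound
    (n f d : ℕ) (hn : 0 < n) (hf : 0 < f) (hd : 0 < d)
    (X1 X2 : Matrix (Fin n) (Fin f) ℝ) (W : Matrix (Fin f) (Fin d) ℝ)
    (lam : ℝ) (hlam : 0 < lam)
    (Z1 Z2 : Matrix (Fin n) (Fin d) ℝ)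
    (hZ1 : Z1 = X1 * W) (hZ2 : Z2 = X2 * W)
    (hcol1 : ∀ i, matCol Z1 i ≠ 0) (hcol2 : ∀ i, matCol Z2 i ≠ 0)
    (M : Matrix (Fin d) (Fin d) ℝ)
    (hM : ∀ i j, M i j = ⟪matCol Z1 i, matCol Z2 j⟫ / (‖matCol Z1 i‖ * ‖matCol Z2 j‖))
    (hH : ∀ x : Fin f → ℝ, 0 ≤ x ⬝ᵥ ((X1ᵀ * X2) *ᵥ x)) :
    (∑ i, (M i i - 1) ^ 2) + lam * ∑ i, ∑ j ∈ Finset.univ.erase i, (M i j) ^ 2 ≤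
      (d : ℝ) + lam * ∑ i, ∑ j ∈ Finset.univ.erase i, (M i j) ^ 2 := by
  have key : ∀ i : Fin d, (M i i - 1) ^ 2 ≤ 1 := by
    intro i
    have hinner : ⟪matCol Z1 i, matCol Z2 i⟫ =
        (fun j => W j i) ⬝ᵥ ((X1ᵀ * X2) *ᵥ (fun j => W j i)) := by
      rw [← Matrix.mulVec_mulVec, Matrix.dotProduct_mulVec, Matrix.vecMul_transpose]
      simp [matCol, hZ1, hZ2, PiLp.inner_apply, RCLike.inner_apply, dotProduct,
        Matrix.mulVec, Matrix.mul_apply, mul_comm]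
    have hnn : 0 ≤ ⟪matCol Z1 i, matCol Z2 i⟫ := hinner ▸ hH _
    have hcs : ⟪matCol Z1 i, matCol Z2 i⟫ ≤ ‖matCol Z1 i‖ * ‖matCol Z2 i‖ :=
      real_inner_le_norm _ _
    have hden : 0 < ‖matCol Z1 i‖ * ‖matCol Z2 i‖ :=
      mul_pos (norm_pos_iff.mpr (hcol1 i)) (norm_pos_iff.mpr (hcol2 i))
    have h1 : 0 ≤ M i i := by
      rw [hM]; positivity
    have h2 : M i i ≤ 1 := by
      rw [hM]
      exact (div_le_one hden).mpr hcs
    nlinarith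
  have hsum : (∑ i, (M i i - 1) ^ 2) ≤ (d : ℝ) := by
    calc (∑ i, (M i i - 1) ^ 2) ≤ ∑ _i : Fin d, (1 : ℝ) :=
          Finset.sum_le_sum fun i _ => key i
      _ = (d : ℝ) := by simp
  linarith
end

section
/- Let n, f, d be positive natural numbers, let X̃₁, X̃₂ ∈ ℝ^{n×f} and W ∈ ℝ^{f×d}, and set Z¹ = X̃₁ W and Z² = X̃₂ W, with every column Z¹_{:i}, Z²_{:i} nonzero. Define M_{ij} = ⟨Z¹_{:i}, Z²_{:j}⟩ / (‖Z¹_{:i}‖₂ · ‖Z²_{:j}‖₂). If H = X̃₁ᵀ X̃₂ satisfies xᵀ H x ≤ 0 for every x ∈ ℝ^f, then every diagonal entry satisfies −1 ≤ M_{ii} ≤ 0, and consequently (M_{ii} − 1)² ≥ 1 for every i. -/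
open Matrix BigOperators RealInnerProductSpace

/-- **Step (1.b) of Proposition 1.** If `H = X̃₁ᵀ X̃₂` is negative semi-definite
as a quadratic form, then every diagonal entry of the cross-correlation matrix
satisfies `−1 ≤ Mᵢᵢ ≤ 0`, and consequently `(Mᵢᵢ − 1)² ≥ 1`. -/
theorem diag_nonpos_of_nsd
    (n f d : ℕ) (hn : 0 < n) (hf : 0 < f) (hd : 0 < d)
    (X1 X2 : Matrix (Fin n) (Fin f) ℝ) (W : Matrix (Fin f) (Fin d) ℝ)
    (Z1 Z2 : Matrix (Fin n) (Fin d) ℝ)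
    (hZ1 : Z1 = X1 * W) (hZ2 : Z2 = X2 * W)
    (hcol1 : ∀ i, matCol Z1 i ≠ 0) (hcol2 : ∀ i, matCol Z2 i ≠ 0)
    (M : Matrix (Fin d) (Fin d) ℝ)
    (hM : ∀ i j, M i j = ⟪matCol Z1 i, matCol Z2 j⟫ / (‖matCol Z1 i‖ * ‖matCol Z2 j‖))
    (hH : ∀ x : Fin f → ℝ, x ⬝ᵥ ((X1ᵀ * X2) *ᵥ x) ≤ 0) :
    ∀ i, (-1 ≤ M i i ∧ M i i ≤ 0) ∧ 1 ≤ (M i i - 1) ^ 2 := by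
  intro i
  have h1 : (0:ℝ) < ‖matCol Z1 i‖ := norm_pos_iff.mpr (hcol1 i)
  have h2 : (0:ℝ) < ‖matCol Z2 i‖ := norm_pos_iff.mpr (hcol2 i)
  have hinner : ⟪matCol Z1 i, matCol Z2 i⟫ ≤ 0 := by
    have := hH (fun j => W j i)
    have heq : (fun j => W j i) ⬝ᵥ ((X1ᵀ * X2) *ᵥ (fun j => W j i))
        = ⟪matCol Z1 i, matCol Z2 i⟫ := by
      rw [Matrix.dotProduct_mulVec, ← Matrix.vecMul_vecMul, Matrix.vecMul_transpose,
        ← Matrix.dotProduct_mulVec]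
      simp only [matCol, hZ1, hZ2, PiLp.inner_apply, RCLike.inner_apply, conj_trivial,
        Matrix.mul_apply, Matrix.mulVec, dotProduct, Finset.sum_apply, PiLp.toLp_apply,
        Matrix.smul_apply, smul_eq_mul, Finset.sum_mul, Finset.mul_sum]
      exact Finset.sum_congr rfl fun x _ => by
        rw [Finset.sum_comm]; exact Finset.sum_congr rfl fun _ _ => Finset.sum_congr rfl fun _ _ => mul_comm _ _
    linarith [heq ▸ this]
  have hle : M i i ≤ 0 := by
    rw [hM i i]
    exact div_nonpos_of_nonpos_of_nonneg hinner (mul_pos h1 h2).le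
  have hge : -1 ≤ M i i := by
    rw [hM i i, neg_le, ← neg_div, div_le_one (mul_pos h1 h2)]
    calc -⟪matCol Z1 i, matCol Z2 i⟫ ≤ |⟪matCol Z1 i, matCol Z2 i⟫| := neg_le_abs _
      _ ≤ ‖matCol Z1 i‖ * ‖matCol Z2 i‖ := abs_real_inner_le_norm _ _
  refine ⟨⟨hge, hle⟩, ?_⟩
  nlinarith [hle]
end
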